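/- Let 0 ≤ l < n and z ∈ P_n with z_1 = ⋯ = z_{l+1}. Then I_{succ(z,l)} ⊆ I_z, and the annihilator of the S-module J_{z,l} = I_z / I_{succ(z,l)} equals I_{l+1} = I_{(1^{l+1})}, the ideal generated by all square-free monomials of degree l+1. -/

import Mathlib

open MvPolynomial

/-- `PartitionOn n x` : `x` is a weakly decreasing sequence of naturals (0-based
indexing, so `x 0` is the first part `x_1`) vanishing from index `n` on; this
encodes a partition in `P_n ⊆ ℤ^n_{≥0}`. -/
def PartitionOn (n : ℕ) (x : ℕ → ℕ) : Prop :=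
  (∀ i j : ℕ, i ≤ j → x j ≤ x i) ∧ ∀ i : ℕ, n ≤ i → x i = 0

/-- A partition: a weakly decreasing, eventually zero sequence of naturals. -/
def IsPartitionF (x : ℕ → ℕ) : Prop :=
  (∀ i j : ℕ, i ≤ j → x j ≤ x i) ∧ ∃ n : ℕ, ∀ i : ℕ, n ≤ i → x i = 0

/-- The conjugate partition (1-based index): `conj x i = #{j : x_j ≥ i}`. -/
noncomputable def conj (x : ℕ → ℕ) (i : ℕ) : ℕ :=
  Set.ncard { j : ℕ | i ≤ x j }

/-- The truncation `x(c)`, whose parts are `min (x i) c`. -/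
def trunc (x : ℕ → ℕ) (c : ℕ) : ℕ → ℕ := fun i => min (x i) c

/-- The rectangular partition `(b^a)`: `a` parts equal to `b`. -/
def rect (a b : ℕ) : ℕ → ℕ := fun i => if i < a then b else 0

/-- The size `|x| = x_1 + ⋯ + x_n` of a partition supported in the first `n` indices. -/
def psize (n : ℕ) (x : ℕ → ℕ) : ℕ := ∑ i ∈ Finset.range n, x i

/-- The set `Z(X)` : pairs `(z, l)` with `z ∈ P_n`, `l ≥ 0` such that, writing `c = z_1`:
(1) there is `x ∈ X` with `x(c) ≤ z` and `x'_{c+1} ≤ l+1`, and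
(2) every `x ∈ X` with `x(c) ≤ z` and `x'_{c+1} ≤ l+1` has `x'_{c+1} = l+1`. -/
noncomputable def ZX (n : ℕ) (X : Set (ℕ → ℕ)) : Set ((ℕ → ℕ) × ℕ) :=
  { zl | PartitionOn n zl.1 ∧
    (∃ x ∈ X, trunc x (zl.1 0) ≤ zl.1 ∧ conj x (zl.1 0 + 1) ≤ zl.2 + 1) ∧
    ∀ x ∈ X, trunc x (zl.1 0) ≤ zl.1 → conj x (zl.1 0 + 1) ≤ zl.2 + 1 →
      conj x (zl.1 0 + 1) = zl.2 + 1 }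

/-- The monomial `e^u = e_1^{u_1} ⋯ e_n^{u_n}` in `S = k[e_1, …, e_n]`. -/
noncomputable def mon (k : Type*) [Field k] (n : ℕ) (u : ℕ → ℕ) : MvPolynomial (Fin n) k :=
  ∏ i : Fin n, (X i : MvPolynomial (Fin n) k) ^ u (i : ℕ)

/-- The ideal `I_x` generated by the `S_n`-orbit of the monomial `e^x`. -/
noncomputable def Ipart (k : Type*) [Field k] (n : ℕ) (x : ℕ → ℕ) :
    Ideal (MvPolynomial (Fin n) k) :=
  Ideal.span { f | ∃ σ : Equiv.Perm (Fin n),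
    f = ∏ i : Fin n, (X i : MvPolynomial (Fin n) k) ^ x ((σ i : Fin n) : ℕ) }

/-- The ideal `I_X = Σ_{x ∈ X} I_x`. -/
noncomputable def IXset (k : Type*) [Field k] (n : ℕ) (Xs : Set (ℕ → ℕ)) :
    Ideal (MvPolynomial (Fin n) k) :=
  ⨆ x ∈ Xs, Ipart k n x

/-- `succ(z,l) = {x ∈ P_n : x ≥ z and x_i > z_i for some i > l}` (1-based `i > l`
corresponds to 0-based index `≥ l`). -/
def succSet (n l : ℕ) (z : ℕ → ℕ) : Set (ℕ → ℕ) :=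
  { x | PartitionOn n x ∧ (∀ i, z i ≤ x i) ∧ ∃ i, l ≤ i ∧ z i < x i }

/-- `Y_{z,l} = {((z_1+1)^{l+1})} ∪ {((z_i+1)^i) : l+1 < i ≤ n, z_{i-1} > z_i}`
(here `i = m+2` in 1-based indexing). -/
def Yset (n : ℕ) (z : ℕ → ℕ) (l : ℕ) : Set (ℕ → ℕ) :=
  {rect (l+1) (z 0 + 1)} ∪
    { y | ∃ m : ℕ, l ≤ m ∧ m + 2 ≤ n ∧ z (m+1) < z m ∧ y = rect (m+2) (z (m+1) + 1) }

/-- `Y'_{z,l} = {((z_i+1)^i) : l+1 < i ≤ n, z_{i-1} > z_i}`. -/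
def Y'set (n : ℕ) (z : ℕ → ℕ) (l : ℕ) : Set (ℕ → ℕ) :=
  { y | ∃ m : ℕ, l ≤ m ∧ m + 2 ≤ n ∧ z (m+1) < z m ∧ y = rect (m+2) (z (m+1) + 1) }

/-- An ideal `I` is symmetric shifted if for every monomial `e^x ∈ I` with `x ∈ P_n`
and every `1 < k ≤ n` (0-based `0 < j < n`) with `x_1 > x_k`, one has `e^x · e_k/e_1 ∈ I`. -/
def SymShifted (k : Type*) [Field k] (n : ℕ) (I : Ideal (MvPolynomial (Fin n) k)) : Prop :=
  ∀ x : ℕ → ℕ, PartitionOn n x → mon k n x ∈ I →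
    ∀ j : ℕ, 0 < j → j < n → x j < x 0 →
      mon k n (fun i => if i = 0 then x 0 - 1 else if i = j then x j + 1 else x i) ∈ I

/-- The partitioning problem `BP(d, C; w)` is `r`-feasible: the multiset of `d` copies of
each of `w_1, …, w_n` (balls indexed by `Fin d × Fin n`, ball `(j,i)` of weight `w_i`)
can be distributed into bins `B_1, …, B_n` of exactly `d` balls each so that
`w(B_i) ≤ C_i` for all `i = r+1, …, n` (0-based bins `≥ r`). -/
def RFeasible (n d r : ℕ) (C w : ℕ → ℕ) : Prop :=
  ∃ A : Fin d × Fin n → Fin n,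
    (∀ b : Fin n, (Finset.univ.filter fun p => A p = b).card = d) ∧
    ∀ b : Fin n, r ≤ (b : ℕ) →
      (∑ p ∈ Finset.univ.filter (fun p => A p = b), w ((p.2 : Fin n) : ℕ)) ≤ C (b : ℕ)

/-- `X_w^d = {x ∈ P_n : x = σ_1(w) + ⋯ + σ_d(w) for some σ_1, …, σ_d ∈ S_n}`. -/
def XwPow (n d : ℕ) (w : ℕ → ℕ) : Set (ℕ → ℕ) :=
  { x | PartitionOn n x ∧ ∃ σ : Fin d → Equiv.Perm (Fin n),
      ∀ i : Fin n, x (i : ℕ) = ∑ j : Fin d, w ((σ j i : Fin n) : ℕ) }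

/-- `Y_n`: the elements of `Y` with at most `n` nonzero parts, regarded in `P_n`. -/
def restr (Y : Set (ℕ → ℕ)) (n : ℕ) : Set (ℕ → ℕ) :=
  { x ∈ Y | ∀ i, n ≤ i → x i = 0 }


section Stmt2Aux

open Finset

variable {k : Type*} [Field k] {n : ℕ}

/-- The exponent finsupp of the orbit generator attached to `x` and `σ`. -/
noncomputable def expOf (n : ℕ) (x : ℕ → ℕ) (σ : Equiv.Perm (Fin n)) : Fin n →₀ ℕ :=
  Finsupp.equivFunOnFinite.symm fun i : Fin n => x ((σ i : Fin n) : ℕ)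

lemma expOf_apply (x : ℕ → ℕ) (σ : Equiv.Perm (Fin n)) (i : Fin n) :
    expOf n x σ i = x ((σ i : Fin n) : ℕ) := rfl

lemma prod_eq_monomial (x : ℕ → ℕ) (σ : Equiv.Perm (Fin n)) :
    (∏ i : Fin n, (X i : MvPolynomial (Fin n) k) ^ x ((σ i : Fin n) : ℕ)) =
      monomial (expOf n x σ) (1 : k) := by
  rw [← MvPolynomial.prod_X_pow_eq_monomial]
  rw [← Finset.prod_subset (Finset.subset_univ (expOf n x σ).support)
    (fun i _ hi => by
      rw [Finsupp.notMem_support_iff] at hi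
      rw [show (expOf n x σ) i = x ((σ i : Fin n) : ℕ) from rfl] at hi
      rw [hi, pow_zero])]
  exact Finset.prod_congr rfl fun i _ => rfl

lemma Ipart_eq_span (x : ℕ → ℕ) :
    Ipart k n x = Ideal.span ((fun s => monomial s (1 : k)) ''
      { s : Fin n →₀ ℕ | ∃ σ : Equiv.Perm (Fin n), s = expOf n x σ }) := by
  rw [Ipart]
  congr 1
  ext f
  constructor
  · rintro ⟨σ, rfl⟩
    exact ⟨expOf n x σ, ⟨σ, rfl⟩, (prod_eq_monomial x σ).symm⟩
  · rintro ⟨s, ⟨σ, rfl⟩, rfl⟩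
    exact ⟨σ, (prod_eq_monomial x σ).symm⟩

lemma IXset_eq_span (Xs : Set (ℕ → ℕ)) :
    IXset k n Xs = Ideal.span ((fun s => monomial s (1 : k)) ''
      { s : Fin n →₀ ℕ | ∃ x ∈ Xs, ∃ σ : Equiv.Perm (Fin n), s = expOf n x σ }) := by
  rw [IXset]
  simp_rw [Ipart_eq_span]
  simp_rw [← Ideal.span_iUnion]
  congr 1
  ext f
  simp only [Set.mem_iUnion, Set.mem_image, Set.mem_setOf_eq]
  constructor
  · rintro ⟨x, hx, s, ⟨σ, rfl⟩, rfl⟩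
    exact ⟨expOf n x σ, ⟨x, hx, σ, rfl⟩, rfl⟩
  · rintro ⟨s, ⟨x, hx, σ, rfl⟩, rfl⟩
    exact ⟨x, hx, expOf n x σ, ⟨σ, rfl⟩, rfl⟩

lemma mem_IXset_iff {Xs : Set (ℕ → ℕ)} {f : MvPolynomial (Fin n) k} :
    f ∈ IXset k n Xs ↔
      ∀ m ∈ f.support, ∃ x ∈ Xs, ∃ σ : Equiv.Perm (Fin n), expOf n x σ ≤ m := by
  rw [IXset_eq_span, MvPolynomial.mem_ideal_span_monomial_image]
  constructor
  · intro h m hm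
    obtain ⟨si, ⟨x, hx, σ, rfl⟩, hle⟩ := h m hm
    exact ⟨x, hx, σ, hle⟩
  · intro h m hm
    obtain ⟨x, hx, σ, hle⟩ := h m hm
    exact ⟨expOf n x σ, ⟨x, hx, σ, rfl⟩, hle⟩

lemma exists_perm_mapsTo {α : Type*} [Fintype α] [DecidableEq α] {s t : Finset α}
    (h : s.card ≤ t.card) : ∃ σ : Equiv.Perm α, ∀ i ∈ s, σ i ∈ t := by
  obtain ⟨t', ht't, ht'⟩ := Finset.exists_subset_card_eq h
  have hc : s.card = t'.card := ht'.symm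
  have e1 : {a // a ∈ s} ≃ {a // a ∈ t'} := Finset.equivOfCardEq hc
  have hcc : sᶜ.card = t'ᶜ.card := by
    rw [Finset.card_compl, Finset.card_compl, hc]
  have e2' : {a // a ∈ sᶜ} ≃ {a // a ∈ t'ᶜ} := Finset.equivOfCardEq hcc
  have e2 : {a // ¬ a ∈ s} ≃ {a // ¬ a ∈ t'} :=
    ((Equiv.subtypeEquivRight fun a => (Finset.mem_compl (s := s)).symm).trans e2').trans
      (Equiv.subtypeEquivRight fun a => Finset.mem_compl)
  refine ⟨(Equiv.sumCompl (· ∈ s)).symm.trans ((e1.sumCongr e2).trans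
    (Equiv.sumCompl (· ∈ t'))), fun i hi => ?_⟩
  have h1 : (Equiv.sumCompl (· ∈ s)).symm i = Sum.inl ⟨i, hi⟩ :=
    Equiv.sumCompl_symm_apply_of_pos hi
  simp only [Equiv.trans_apply, h1, Equiv.sumCongr_apply, Sum.map_inl,
    Equiv.sumCompl_apply_inl]
  exact ht't (e1 ⟨i, hi⟩).2

lemma card_filter_coe_lt (m : ℕ) (hm : m ≤ n) :
    (Finset.univ.filter fun j : Fin n => (j : ℕ) < m).card = m := by
  refine Eq.trans ?_ (Finset.card_range m)
  apply Finset.card_bij (fun (j : Fin n) _ => (j : ℕ))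
  · intro j hj
    simp only [Finset.mem_filter] at hj
    exact Finset.mem_range.2 hj.2
  · intro j1 h1 j2 h2 h
    exact Fin.ext h
  · intro i hi
    rw [Finset.mem_range] at hi
    exact ⟨⟨i, lt_of_lt_of_le hi hm⟩, Finset.mem_filter.2 ⟨Finset.mem_univ _, hi⟩, rfl⟩

lemma card_filter_coe_le (m : ℕ) (hm : m < n) :
    (Finset.univ.filter fun j : Fin n => (j : ℕ) ≤ m).card = m + 1 := by
  have he : (Finset.univ.filter fun j : Fin n => (j : ℕ) ≤ m) =
      Finset.univ.filter fun j : Fin n => (j : ℕ) < m + 1 :=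
    Finset.filter_congr fun j _ => Nat.lt_succ_iff.symm
  rw [he]
  exact card_filter_coe_lt (m + 1) hm

lemma card_filter_perm (σ : Equiv.Perm (Fin n)) (P : Fin n → Prop) [DecidablePred P] :
    (Finset.univ.filter fun j => P (σ j)).card = (Finset.univ.filter P).card := by
  apply Finset.card_bij (fun j _ => σ j)
  · intro j hj
    simp only [Finset.mem_filter, Finset.mem_univ, true_and] at hj ⊢
    exact hj
  · intro j1 _ j2 _ h
    exact σ.injective h
  · intro j hj
    simp only [Finset.mem_filter, Finset.mem_univ, true_and] at hj
    exact ⟨σ.symm j, Finset.mem_filter.2 ⟨Finset.mem_univ _, by simpa using hj⟩, by simp⟩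

lemma exists_antitone_perm (u : Fin n → ℕ) :
    ∃ π : Equiv.Perm (Fin n), Antitone (u ∘ π) := by
  refine ⟨Tuple.sort (OrderDual.toDual ∘ u), fun i j hij => ?_⟩
  exact Tuple.monotone_sort (OrderDual.toDual ∘ u) hij

lemma count_le (u : Fin n → ℕ) (π : Equiv.Perm (Fin n)) (hv : Antitone (u ∘ π))
    {c m : ℕ} (hm : m < n)
    (h : (Finset.univ.filter fun j => c < u j).card ≤ m) : u (π ⟨m, hm⟩) ≤ c := by
  by_contra hc
  push_neg at hc
  have hsub : (Finset.univ.filter fun j : Fin n => (j : ℕ) ≤ m) ⊆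
      Finset.univ.filter fun j => c < u (π j) := by
    intro j hj
    simp only [Finset.mem_filter, Finset.mem_univ, true_and] at hj ⊢
    exact lt_of_lt_of_le hc (hv (show j ≤ (⟨m, hm⟩ : Fin n) from hj))
  have h2 := Finset.card_le_card hsub
  rw [card_filter_coe_le m hm, card_filter_perm π (fun j => c < u j)] at h2
  omega

lemma count_lt (u : Fin n → ℕ) (π : Equiv.Perm (Fin n)) (hv : Antitone (u ∘ π))
    {c m : ℕ} (hm : m < n)
    (h : m + 1 ≤ (Finset.univ.filter fun j => c < u j).card) : c < u (π ⟨m, hm⟩) := by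
  by_contra hc
  push_neg at hc
  have hsub : (Finset.univ.filter fun j : Fin n => c < u (π j)) ⊆
      Finset.univ.filter fun j : Fin n => (j : ℕ) < m := by
    intro j hj
    simp only [Finset.mem_filter, Finset.mem_univ, true_and] at hj ⊢
    by_contra h'
    push_neg at h'
    exact absurd (le_trans (hv (show (⟨m, hm⟩ : Fin n) ≤ j from h')) hc) (not_le.2 hj)
  have h2 := Finset.card_le_card hsub
  rw [card_filter_coe_lt m (le_of_lt hm), card_filter_perm π (fun j => c < u j)] at h2
  omega

lemma prodgen_mem_succ {l : ℕ} (hl : l < n) {z : ℕ → ℕ} (hz : PartitionOn n z)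
    (σ'' σ' : Equiv.Perm (Fin n)) :
    (∏ i : Fin n, (X i : MvPolynomial (Fin n) k) ^ rect (l + 1) 1 ((σ'' i : Fin n) : ℕ)) *
      (∏ i : Fin n, (X i : MvPolynomial (Fin n) k) ^ z ((σ' i : Fin n) : ℕ)) ∈
      IXset k n (succSet n l z) := by
  set u : Fin n → ℕ := fun i => rect (l + 1) 1 ((σ'' i : Fin n) : ℕ) + z ((σ' i : Fin n) : ℕ)
    with hu
  have hprod : (∏ i : Fin n, (X i : MvPolynomial (Fin n) k) ^
        rect (l + 1) 1 ((σ'' i : Fin n) : ℕ)) *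
      (∏ i : Fin n, (X i : MvPolynomial (Fin n) k) ^ z ((σ' i : Fin n) : ℕ)) =
      ∏ i : Fin n, (X i : MvPolynomial (Fin n) k) ^ u i := by
    rw [← Finset.prod_mul_distrib]
    exact Finset.prod_congr rfl fun i _ => (pow_add _ _ _).symm
  obtain ⟨π, hπ⟩ := exists_antitone_perm u
  set x : ℕ → ℕ := fun m => if h : m < n then u (π ⟨m, h⟩) else 0 with hxdef
  have hxval : ∀ (m : ℕ) (hm : m < n), x m = u (π ⟨m, hm⟩) := by
    intro m hm
    rw [hxdef]
    exact dif_pos hm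
  have hrle : ∀ i : Fin n, rect (l + 1) 1 ((σ'' i : Fin n) : ℕ) ≤ 1 := by
    intro i
    rw [rect]
    split <;> omega
  -- lower bound `z m ≤ x m`
  have fact1 : ∀ (m : ℕ), m < n → z m ≤ x m := by
    intro m hm
    rcases Nat.eq_zero_or_pos (z m) with h0 | h0
    · rw [h0]; exact Nat.zero_le _
    rw [hxval m hm]
    have hcount : m + 1 ≤ (Finset.univ.filter fun j => z m - 1 < u j).card := by
      have hsub : (Finset.univ.filter fun j : Fin n => ((σ' j : Fin n) : ℕ) ≤ m) ⊆
          Finset.univ.filter fun j => z m - 1 < u j := by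
        intro j hj
        simp only [Finset.mem_filter, Finset.mem_univ, true_and] at hj ⊢
        have h1 : z m ≤ z ((σ' j : Fin n) : ℕ) := hz.1 _ m hj
        have h2 : z ((σ' j : Fin n) : ℕ) ≤ u j := Nat.le_add_left _ _
        omega
      have h3 := Finset.card_le_card hsub
      rw [card_filter_perm σ' (fun j : Fin n => (j : ℕ) ≤ m), card_filter_coe_le m hm] at h3
      omega
    have := count_lt u π hπ hm hcount
    omega
  -- upper bound `x m ≤ z m + 1`
  have fact2 : ∀ (m : ℕ), m < n → x m ≤ z m + 1 := by
    intro m hm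
    rw [hxval m hm]
    apply count_le u π hπ hm
    have hsub : (Finset.univ.filter fun j => z m + 1 < u j) ⊆
        Finset.univ.filter fun j : Fin n => ((σ' j : Fin n) : ℕ) < m := by
      intro j hj
      simp only [Finset.mem_filter, Finset.mem_univ, true_and] at hj ⊢
      have h1 := hrle j
      have h2 : z m < z ((σ' j : Fin n) : ℕ) := by
        have : u j = rect (l + 1) 1 ((σ'' j : Fin n) : ℕ) + z ((σ' j : Fin n) : ℕ) := rfl
        omega
      by_contra h3
      push_neg at h3
      exact absurd (hz.1 m _ h3) (by omega)
    have h3 := Finset.card_le_card hsub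
    rw [card_filter_perm σ' (fun j : Fin n => (j : ℕ) < m),
      card_filter_coe_lt m (le_of_lt hm)] at h3
    omega
  have hxpart : PartitionOn n x := by
    constructor
    · intro i j hij
      by_cases hj : j < n
      · have hi : i < n := lt_of_le_of_lt hij hj
        rw [hxval j hj, hxval i hi]
        exact hπ (show (⟨i, hi⟩ : Fin n) ≤ ⟨j, hj⟩ from hij)
      · rw [hxdef]
        simp only
        rw [dif_neg hj]
        exact Nat.zero_le _
    · intro i hi
      rw [hxdef]
      simp only
      rw [dif_neg (by omega)]
  have hge : ∀ i, z i ≤ x i := by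
    intro i
    by_cases hi : i < n
    · exact fact1 i hi
    · rw [hz.2 i (by omega)]
      exact Nat.zero_le _
  -- sum identities
  have hsumu : ∑ j : Fin n, u j = (∑ i ∈ Finset.range n, z i) + (l + 1) := by
    have h1 : ∑ j : Fin n, z ((σ' j : Fin n) : ℕ) = ∑ i ∈ Finset.range n, z i := by
      rw [Equiv.sum_comp σ' (fun j : Fin n => z (j : ℕ))]
      exact Fin.sum_univ_eq_sum_range _ n
    have h2 : ∑ j : Fin n, rect (l + 1) 1 ((σ'' j : Fin n) : ℕ) = l + 1 := by
      rw [Equiv.sum_comp σ'' (fun j : Fin n => rect (l + 1) 1 (j : ℕ))]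
      rw [Fin.sum_univ_eq_sum_range (fun i => rect (l + 1) 1 i) n]
      have h4 : ∀ i ∈ Finset.range n, rect (l + 1) 1 i =
          if i ∈ Finset.range (l + 1) then 1 else 0 := by
        intro i _
        simp [rect, Finset.mem_range]
      rw [Finset.sum_congr rfl h4, Finset.sum_ite_mem,
        Finset.inter_eq_right.2 (by intro i hi; rw [Finset.mem_range] at hi ⊢; omega),
        Finset.sum_const, Finset.card_range, smul_eq_mul, mul_one]
    calc ∑ j : Fin n, u j
        = (∑ j : Fin n, rect (l + 1) 1 ((σ'' j : Fin n) : ℕ)) +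
          ∑ j : Fin n, z ((σ' j : Fin n) : ℕ) := by
          rw [← Finset.sum_add_distrib]
      _ = (∑ i ∈ Finset.range n, z i) + (l + 1) := by rw [h1, h2]; omega
  have hsumx : ∑ i ∈ Finset.range n, x i = ∑ j : Fin n, u j := by
    rw [← Fin.sum_univ_eq_sum_range (fun i => x i) n]
    rw [← Equiv.sum_comp π u]
    exact Finset.sum_congr rfl fun j _ => by rw [hxval (j : ℕ) j.isLt, Fin.eta]
  -- strictness
  have hstrict : ∃ i, l ≤ i ∧ z i < x i := by
    by_contra hcon
    push_neg at hcon
    have heq : ∀ i, l ≤ i → i < n → x i = z i := fun i h1 h2 =>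
      le_antisymm (hcon i h1) (fact1 i h2)
    have hsx : ∑ i ∈ Finset.range n, x i =
        (∑ i ∈ Finset.range l, x i) + ∑ i ∈ Finset.Ico l n, x i := by
      rw [Finset.range_eq_Ico, ← Finset.sum_Ico_consecutive _ (Nat.zero_le l) (le_of_lt hl),
        ← Finset.range_eq_Ico]
    have hsz : ∑ i ∈ Finset.range n, z i =
        (∑ i ∈ Finset.range l, z i) + ∑ i ∈ Finset.Ico l n, z i := by
      rw [Finset.range_eq_Ico, ← Finset.sum_Ico_consecutive _ (Nat.zero_le l) (le_of_lt hl),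
        ← Finset.range_eq_Ico]
    have h5 : ∑ i ∈ Finset.Ico l n, x i = ∑ i ∈ Finset.Ico l n, z i := by
      apply Finset.sum_congr rfl
      intro i hi
      rw [Finset.mem_Ico] at hi
      exact heq i hi.1 hi.2
    have h6 : ∑ i ∈ Finset.range l, x i ≤ (∑ i ∈ Finset.range l, z i) + l := by
      calc ∑ i ∈ Finset.range l, x i ≤ ∑ i ∈ Finset.range l, (z i + 1) :=
            Finset.sum_le_sum fun i hi => fact2 i (lt_trans (Finset.mem_range.1 hi) hl)
        _ = (∑ i ∈ Finset.range l, z i) + l := by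
            rw [Finset.sum_add_distrib, Finset.sum_const, Finset.card_range, smul_eq_mul,
              mul_one]
    omega
  have hxmem : x ∈ succSet n l z := ⟨hxpart, hge, hstrict⟩
  rw [hprod]
  have hIp : (∏ i : Fin n, (X i : MvPolynomial (Fin n) k) ^ u i) ∈ Ipart k n x := by
    apply Ideal.subset_span
    refine ⟨π⁻¹, Finset.prod_congr rfl fun i _ => ?_⟩
    congr 1
    have hlt : ((π⁻¹ i : Fin n) : ℕ) < n := (π⁻¹ i).isLt
    rw [hxval _ hlt, Fin.eta]
    rw [show π (π⁻¹ i) = i from π.apply_symm_apply i]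
  have hle : Ipart k n x ≤ ⨆ y ∈ succSet n l z, Ipart k n y := le_iSup₂ (f := fun y (_ : y ∈ succSet n l z) => Ipart k n y) x hxmem
  exact hle hIp

end Stmt2Aux

theorem stmt_2 {k : Type*} [Field k] (n l : ℕ) (hl : l < n)
    (z : ℕ → ℕ) (hz : PartitionOn n z) (hzflat : ∀ i ≤ l, z i = z 0) :
    IXset k n (succSet n l z) ≤ Ipart k n z ∧
      Submodule.colon (IXset k n (succSet n l z)) (Ipart k n z) =
        Ipart k n (rect (l + 1) 1) := by
  have hmul : Ipart k n (rect (l + 1) 1) * Ipart k n z ≤ IXset k n (succSet n l z) := by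
    rw [Ipart, Ipart, Ideal.span_mul_span']
    apply Ideal.span_le.2
    rintro f hf
    rw [Set.mem_mul] at hf
    obtain ⟨g, ⟨σ'', rfl⟩, h, ⟨σ', rfl⟩, rfl⟩ := hf
    exact prodgen_mem_succ hl hz σ'' σ'
  constructor
  · -- I_succ ≤ I_z
    have : (⨆ x ∈ succSet n l z, Ipart k n x) ≤ Ipart k n z := by
      apply iSup₂_le
      intro x hx
      rw [Ipart, Ipart]
      apply Ideal.span_le.2
      rintro f ⟨σ, rfl⟩
      have hle : ∀ i : Fin n, z ((σ i : Fin n) : ℕ) ≤ x ((σ i : Fin n) : ℕ) :=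
        fun i => hx.2.1 _
      have hsplit : (∏ i : Fin n, (X i : MvPolynomial (Fin n) k) ^ x ((σ i : Fin n) : ℕ)) =
          (∏ i : Fin n, (X i : MvPolynomial (Fin n) k) ^
            (x ((σ i : Fin n) : ℕ) - z ((σ i : Fin n) : ℕ))) *
          ∏ i : Fin n, (X i : MvPolynomial (Fin n) k) ^ z ((σ i : Fin n) : ℕ) := by
        rw [← Finset.prod_mul_distrib]
        refine Finset.prod_congr rfl fun i _ => ?_
        rw [← pow_add, Nat.sub_add_cancel (hle i)]
      rw [hsplit]
      exact Ideal.mul_mem_left _ _ (Ideal.subset_span ⟨σ, rfl⟩)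
    exact this
  · apply le_antisymm
    · -- colon ≤ I_{(1^{l+1})}
      intro r hr
      by_contra hrI
      rw [Ipart_eq_span, MvPolynomial.mem_ideal_span_monomial_image] at hrI
      push_neg at hrI
      obtain ⟨a, ha, hna⟩ := hrI
      -- the support of `a` has at most `l` elements
      have hcard : a.support.card ≤ l := by
        by_contra hc
        push_neg at hc
        obtain ⟨T, hTs, hT⟩ := Finset.exists_subset_card_eq (show l + 1 ≤ a.support.card by omega)
        have hSlow : (Finset.univ.filter fun j : Fin n => (j : ℕ) < l + 1).card = l + 1 :=
          card_filter_coe_lt (l + 1) hl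
        obtain ⟨σ₀, hσ₀⟩ := exists_perm_mapsTo
          (s := Finset.univ.filter fun j : Fin n => (j : ℕ) < l + 1) (t := T)
          (le_of_eq (hSlow.trans hT.symm))
        obtain ⟨si, hsi, hsile⟩ : ∃ si ∈
            { s : Fin n →₀ ℕ | ∃ σ : Equiv.Perm (Fin n), s = expOf n (rect (l + 1) 1) σ },
            si ≤ a := by
          refine ⟨expOf n (rect (l + 1) 1) σ₀⁻¹, ⟨σ₀⁻¹, rfl⟩, Finsupp.le_def.2 fun i => ?_⟩
          rw [expOf_apply]
          by_cases hi : (((σ₀⁻¹ : Equiv.Perm (Fin n)) i : Fin n) : ℕ) < l + 1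
          · have h1 : σ₀ (σ₀⁻¹ i) ∈ T :=
              hσ₀ _ (Finset.mem_filter.2 ⟨Finset.mem_univ _, hi⟩)
            rw [show σ₀ (σ₀⁻¹ i) = i from σ₀.apply_symm_apply i] at h1
            have h2 : a i ≠ 0 := Finsupp.mem_support_iff.1 (hTs h1)
            have h3 : rect (l + 1) 1 (((σ₀⁻¹ : Equiv.Perm (Fin n)) i : Fin n) : ℕ) = 1 := by
              rw [rect, if_pos hi]
            omega
          · have h3 : rect (l + 1) 1 (((σ₀⁻¹ : Equiv.Perm (Fin n)) i : Fin n) : ℕ) = 0 := by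
              rw [rect, if_neg hi]
            omega
        exact hna si hsi hsile
      -- choose `σ'` sending the support of `a` into the flat region
      obtain ⟨σ', hσ'⟩ := exists_perm_mapsTo (s := a.support)
        (t := Finset.univ.filter fun j : Fin n => (j : ℕ) < l + 1)
        (by rw [card_filter_coe_lt (l + 1) hl]; omega)
      have hp : (∏ i : Fin n, (X i : MvPolynomial (Fin n) k) ^ z ((σ' i : Fin n) : ℕ)) ∈
          Ipart k n z := Ideal.subset_span ⟨σ', rfl⟩
      have hrp : r * (∏ i : Fin n, (X i : MvPolynomial (Fin n) k) ^ z ((σ' i : Fin n) : ℕ)) ∈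
          IXset k n (succSet n l z) := by
        have := Submodule.mem_colon.1 hr _ hp
        rwa [smul_eq_mul] at this
      set u : Fin n →₀ ℕ := a + expOf n z σ' with hudef
      have huval : ∀ j : Fin n, u j = a j + z ((σ' j : Fin n) : ℕ) := fun j => rfl
      have hu : u ∈ (r * ∏ i : Fin n,
          (X i : MvPolynomial (Fin n) k) ^ z ((σ' i : Fin n) : ℕ)).support := by
        rw [MvPolynomial.mem_support_iff, prod_eq_monomial, hudef,
          MvPolynomial.coeff_mul_monomial, mul_one]
        exact MvPolynomial.mem_support_iff.1 ha
      rw [mem_IXset_iff] at hrp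
      obtain ⟨x, hxsucc, π', hπ'⟩ := hrp u hu
      obtain ⟨hxpart, hxz, i₁, hi₁l, hi₁⟩ := hxsucc
      have hi₁n : i₁ < n := by
        by_contra hcc
        push_neg at hcc
        rw [hxpart.2 i₁ hcc] at hi₁
        omega
      set c := z i₁ with hcdef
      set B := Finset.univ.filter fun j : Fin n => c < u j with hBdef
      have hlow : i₁ + 1 ≤ B.card := by
        have h1 : (Finset.univ.filter fun j : Fin n => (j : ℕ) ≤ i₁).card ≤ B.card := by
          apply Finset.card_le_card_of_injOn (fun j => (π'⁻¹ : Equiv.Perm (Fin n)) j)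
          · intro j hj
            simp only [Finset.coe_filter, Finset.mem_filter, Finset.mem_univ, true_and, Set.mem_setOf_eq] at hj
            rw [hBdef]
            refine Finset.mem_coe.2 (Finset.mem_filter.2 ⟨Finset.mem_univ _, ?_⟩)
            have h2 : x ((π' (π'⁻¹ j) : Fin n) : ℕ) ≤ u (π'⁻¹ j) := by
              have := hπ' (π'⁻¹ j)
              rwa [expOf_apply] at this
            rw [show π' (π'⁻¹ j) = j from π'.apply_symm_apply j] at h2
            have h3 : x i₁ ≤ x (j : ℕ) := hxpart.1 _ _ hj
            beta_reduce
            omega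
          · intro j1 _ j2 _ hj
            exact (π'⁻¹ : Equiv.Perm (Fin n)).injective hj
        rw [card_filter_coe_le i₁ hi₁n] at h1
        exact h1
      have hup : B.card ≤ i₁ := by
        by_cases hz0 : z 0 = c
        · have hsub : B ⊆ a.support := by
            intro j hj
            rw [hBdef, Finset.mem_filter] at hj
            rw [Finsupp.mem_support_iff]
            intro ha0
            have h1 : u j = z ((σ' j : Fin n) : ℕ) := by rw [huval, ha0, zero_add]
            have h2 : z ((σ' j : Fin n) : ℕ) ≤ z 0 := hz.1 0 _ (Nat.zero_le _)
            omega
          calc B.card ≤ a.support.card := Finset.card_le_card hsub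
            _ ≤ l := hcard
            _ ≤ i₁ := hi₁l
        · have hz0' : c < z 0 := lt_of_le_of_ne (hz.1 0 i₁ (Nat.zero_le _)) (Ne.symm hz0)
          have h1 : B.card ≤ (Finset.univ.filter fun j : Fin n => (j : ℕ) < i₁).card := by
            apply Finset.card_le_card_of_injOn (fun j => σ' j)
            · intro j hj
              rw [Finset.mem_coe, Finset.mem_filter] at hj
              refine Finset.mem_coe.2 (Finset.mem_filter.2 ⟨Finset.mem_univ _, ?_⟩)
              have hcz : c < z ((σ' j : Fin n) : ℕ) := by
                by_cases haj : a j = 0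
                · have h2 : u j = z ((σ' j : Fin n) : ℕ) := by rw [huval, haj, zero_add]
                  have := hj.2
                  omega
                · have hjs : j ∈ a.support := Finsupp.mem_support_iff.2 haj
                  have h3 := hσ' j hjs
                  rw [Finset.mem_filter] at h3
                  rw [hzflat ((σ' j : Fin n) : ℕ) (by omega)]
                  exact hz0'
              by_contra hge
              push_neg at hge
              have := hz.1 i₁ ((σ' j : Fin n) : ℕ) hge
              omega
            · intro j1 _ j2 _ hj
              exact σ'.injective hj
          rw [card_filter_coe_lt i₁ (le_of_lt hi₁n)] at h1
          exact h1
      omega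
    · -- I_{(1^{l+1})} ≤ colon
      intro r hr
      rw [Submodule.mem_colon]
      intro p hp
      rw [smul_eq_mul]
      exact hmul (Ideal.mul_mem_mul hr hp)
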